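/- For all r_b > 0 and r_d > 0, and all x ∈ ℝ² with r_b ≤ ‖x‖ < r_b + r_d, the Lebesgue measure of the lens satisfies vol(B(0, r_b) ∩ B(x, r_d)) > 0. Consequently, for every device intensity λ > 0, the expected one-hop-augmented covered area A(λ) = π (r_b + r_d)² − 2π ∫_{r_b}^{r_b + r_d} s · exp(−λ · vol(B(0, r_b) ∩ B(s·e₁, r_d))) ds satisfies the strict inequality A(λ) > π r_b²: one-hop D2D relaying strictly extends the coverage of the base station. -/

import Mathlib

open MeasureTheory Metric Real

/-- The expected one-hop-augmented covered area of Theorem 1, as a function of the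
device intensity `λ`. -/
noncomputable def coveredArea (rb rd lam : ℝ) : ℝ :=
  π * (rb + rd) ^ 2 -
    2 * π * ∫ s in rb..(rb + rd),
      s * Real.exp (-lam *
        (volume (closedBall (0 : EuclideanSpace ℝ (Fin 2)) rb ∩
          closedBall (s • EuclideanSpace.single (0 : Fin 2) (1 : ℝ)) rd)).toReal)

/-- For `r_b ≤ ‖x‖ < r_b + r_d` the lens `B(0,r_b) ∩ B(x,r_d)` has
positive Lebesgue measure, and consequently `A(λ) > π r_b²` for every `λ > 0`. -/
theorem lens_pos_and_strict_coverage (rb rd : ℝ) (hrb : 0 < rb) (hrd : 0 < rd) :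
    (∀ x : EuclideanSpace ℝ (Fin 2), rb ≤ ‖x‖ → ‖x‖ < rb + rd →
      0 < (volume (closedBall (0 : EuclideanSpace ℝ (Fin 2)) rb ∩
        closedBall x rd)).toReal) ∧
    (∀ lam : ℝ, 0 < lam → π * rb ^ 2 < coveredArea rb rd lam) := by
  have part1 : ∀ x : EuclideanSpace ℝ (Fin 2), rb ≤ ‖x‖ → ‖x‖ < rb + rd →
      0 < (volume (closedBall (0 : EuclideanSpace ℝ (Fin 2)) rb ∩
        closedBall x rd)).toReal := by
    intro x hx1 hx2
    set n := ‖x‖ with hn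
    have hn0 : 0 < n := lt_of_lt_of_le hrb hx1
    set g : ℝ := rd - (n - rb) with hg
    have hg0 : 0 < g := by simp [hg]; linarith
    set ε : ℝ := min rb (g / 2) with hε
    have hε0 : 0 < ε := lt_min hrb (by linarith)
    have hεrb : ε ≤ rb := min_le_left _ _
    have hεg : ε ≤ g / 2 := min_le_right _ _
    set p : EuclideanSpace ℝ (Fin 2) := ((rb - ε / 2) / n) • x with hp
    have hnp : ‖p‖ = rb - ε / 2 := by
      rw [hp, norm_smul, ← hn]
      rw [Real.norm_eq_abs, abs_of_nonneg (div_nonneg (by linarith) hn0.le)]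
      field_simp
    have hdist0 : dist p 0 = rb - ε / 2 := by
      rw [dist_zero_right, hnp]
    have hdistx : dist p x = n - (rb - ε / 2) := by
      rw [dist_eq_norm, hp]
      have : ((rb - ε / 2) / n) • x - x = (((rb - ε / 2) / n) - 1) • x := by
        rw [sub_smul, one_smul]
      rw [this, norm_smul, ← hn, Real.norm_eq_abs]
      have h1 : (rb - ε / 2) / n - 1 ≤ 0 := by
        rw [sub_nonpos, div_le_one hn0]; linarith
      rw [abs_of_nonpos h1]
      field_simp
      ring
    have hsub : closedBall p (ε / 4) ⊆
        closedBall (0 : EuclideanSpace ℝ (Fin 2)) rb ∩ closedBall x rd := by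
      apply Set.subset_inter
      · apply closedBall_subset_closedBall'
        rw [hdist0]; linarith
      · apply closedBall_subset_closedBall'
        rw [hdistx]; linarith
    have hpos : 0 < volume (closedBall (0 : EuclideanSpace ℝ (Fin 2)) rb ∩ closedBall x rd) :=
      lt_of_lt_of_le (measure_closedBall_pos volume p (by positivity)) (measure_mono hsub)
    have hfin : volume (closedBall (0 : EuclideanSpace ℝ (Fin 2)) rb ∩ closedBall x rd) < ⊤ :=
      lt_of_le_of_lt (measure_mono Set.inter_subset_left) measure_closedBall_lt_top
    exact ENNReal.toReal_pos hpos.ne' hfin.ne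
  refine ⟨part1, ?_⟩
  intro lam hlam
  set V : ℝ → ℝ := fun s =>
    (volume (closedBall (0 : EuclideanSpace ℝ (Fin 2)) rb ∩
      closedBall (s • EuclideanSpace.single (0 : Fin 2) (1 : ℝ)) rd)).toReal with hV
  set gfun : ℝ → ℝ := fun s => s * Real.exp (-lam * V s) with hgfun
  have hcov : coveredArea rb rd lam =
      π * (rb + rd) ^ 2 - 2 * π * ∫ s in rb..(rb + rd), gfun s := rfl
  have hVpos : ∀ s ∈ Set.Ioo rb (rb + rd), 0 < V s := by
    intro s hs
    have hnorm : ‖s • EuclideanSpace.single (0 : Fin 2) (1 : ℝ)‖ = s := by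
      rw [norm_smul, EuclideanSpace.norm_single, Real.norm_eq_abs, Real.norm_eq_abs,
        abs_one, mul_one, abs_of_pos (lt_trans hrb hs.1)]
    exact part1 _ (by rw [hnorm]; exact hs.1.le) (by rw [hnorm]; exact hs.2)
  by_cases hInt : IntervalIntegrable gfun volume rb (rb + rd)
  · have hid : IntervalIntegrable (fun s : ℝ => s) volume rb (rb + rd) :=
      intervalIntegral.intervalIntegrable_id
    have hdiff : IntervalIntegrable (fun s => s - gfun s) volume rb (rb + rd) := hid.sub hInt
    have hposint : 0 < ∫ s in rb..(rb + rd), (s - gfun s) := by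
      apply intervalIntegral.intervalIntegral_pos_of_pos_on hdiff _ (by linarith)
      intro s hs
      have hs0 : 0 < s := lt_trans hrb hs.1
      have hexp : Real.exp (-lam * V s) < 1 := by
        rw [Real.exp_lt_one_iff]
        have := hVpos s hs
        nlinarith
      have : gfun s < s := by
        calc gfun s = s * Real.exp (-lam * V s) := rfl
        _ < s * 1 := by exact mul_lt_mul_of_pos_left hexp hs0
        _ = s := mul_one s
      linarith
    rw [intervalIntegral.integral_sub hid hInt] at hposint
    have hidval : (∫ s in rb..(rb + rd), s) = ((rb + rd) ^ 2 - rb ^ 2) / 2 := by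
      rw [integral_id]
    have hIlt : (∫ s in rb..(rb + rd), gfun s) < ((rb + rd) ^ 2 - rb ^ 2) / 2 := by
      rw [← hidval]; linarith
    rw [hcov]
    nlinarith [pi_pos]
  · rw [hcov, intervalIntegral.integral_undef hInt]
    have h2 : rb ^ 2 < (rb + rd) ^ 2 := by nlinarith
    nlinarith [pi_pos]
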